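/- arXiv:0906.4245 — 3 statements merged into one kernel-verified Lean document; each statement's English description precedes it below -/
import Mathlib

section
/- (Lemma 2) An element x of the ring T = ℤ[p,p⁻¹,q,q⁻¹]/((p−1)(p−q),(q−1)(p−q)) is a zero divisor (i.e. there exists y ≠ 0 in T with x·y = 0) if and only if ε(x) = 0, where ε : T → ℤ is the ring homomorphism determined by ε(p) = ε(q) = 1. -/
/-!  The ring `T = ℤ[p,p⁻¹,q,q⁻¹] / ((p−1)(p−q), (q−1)(p−q))`.

We realize the two-variable Laurent polynomial ring `ℤ[p,p⁻¹,q,q⁻¹]` as the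
iterated Laurent polynomial ring `(ℤ[T;T⁻¹])[T;T⁻¹]`, where the inner variable
is `p` and the outer variable is `q`.  -/

noncomputable section

/-- The two-variable Laurent polynomial ring `ℤ[p,p⁻¹,q,q⁻¹]`. -/
abbrev L : Type := LaurentPolynomial (LaurentPolynomial ℤ)

/-- The variable `p` (the inner variable). -/
def pL : L := LaurentPolynomial.C (LaurentPolynomial.T 1)

/-- The variable `q` (the outer variable). -/
def qL : L := LaurentPolynomial.T 1

/-- The defining ideal `((p−1)(p−q), (q−1)(p−q))`. -/
def idealI : Ideal L := Ideal.span {(pL - 1) * (pL - qL), (qL - 1) * (pL - qL)}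

/-- The ring `T = ℤ[p,p⁻¹,q,q⁻¹] / ((p−1)(p−q), (q−1)(p−q))`. -/
abbrev TT : Type := L ⧸ idealI

/-- The image of `p` in `T`. -/
def pT : TT := Ideal.Quotient.mk idealI pL

/-- The image of `q` in `T`. -/
def qT : TT := Ideal.Quotient.mk idealI qL

open LaurentPolynomial

/-- The monoid hom `n ↦ T n`. -/
def Tmh (R : Type) [CommSemiring R] : Multiplicative ℤ →* LaurentPolynomial R where
  toFun n := T n.toAdd
  map_one' := T_zero
  map_mul' _ _ := T_add _ _

/-- Two ring homs out of `L` agreeing on `pL` and `qL` are equal. -/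
lemma L_ringHom_ext {S : Type} [CommRing S] {f g : L →+* S}
    (hp : f pL = g pL) (hq : f qL = g qL) : f = g := by
  apply AddMonoidAlgebra.ringHom_ext
  · intro b
    have hC : (f.comp (LaurentPolynomial.C (R := LaurentPolynomial ℤ))).comp
          (LaurentPolynomial.C (R := ℤ))
        = (g.comp (LaurentPolynomial.C (R := LaurentPolynomial ℤ))).comp
          (LaurentPolynomial.C (R := ℤ)) :=
      RingHom.ext_int _ _
    have hcomp : f.comp (LaurentPolynomial.C (R := LaurentPolynomial ℤ))
        = g.comp (LaurentPolynomial.C (R := LaurentPolynomial ℤ)) := by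
      apply AddMonoidAlgebra.ringHom_ext
      · intro n
        exact RingHom.congr_fun hC n
      · intro a
        have h1 : ((f.comp (LaurentPolynomial.C (R := LaurentPolynomial ℤ))
              : LaurentPolynomial ℤ →* S).comp (Tmh ℤ))
            = ((g.comp (LaurentPolynomial.C (R := LaurentPolynomial ℤ))
              : LaurentPolynomial ℤ →* S).comp (Tmh ℤ)) :=
          MonoidHom.ext_mint hp
        exact DFunLike.congr_fun h1 (Multiplicative.ofAdd a)
    exact RingHom.congr_fun hcomp b
  · intro a
    have h1 : ((f : L →* S).comp (Tmh (LaurentPolynomial ℤ)))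
        = ((g : L →* S).comp (Tmh (LaurentPolynomial ℤ))) :=
      MonoidHom.ext_mint hq
    exact DFunLike.congr_fun h1 (Multiplicative.ofAdd a)

/-- Evaluation of Laurent polynomials over `ℤ` at a unit. -/
def evalAt {A : Type} [CommRing A] (u : Aˣ) : LaurentPolynomial ℤ →+* A :=
  ((AddMonoidAlgebra.lift ℤ A ℤ) ((Units.coeHom A).comp (zpowersHom Aˣ u))).toRingHom

lemma evalAt_T1 {A : Type} [CommRing A] (u : Aˣ) : evalAt u (T 1) = u := by
  show ((AddMonoidAlgebra.lift ℤ A ℤ) ((Units.coeHom A).comp (zpowersHom Aˣ u))) (T 1) = u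
  rw [T, AddMonoidAlgebra.lift_single]
  simp

/-- The substitution `p ↦ T 1`, `q ↦ T 1`. -/
def phi : L →+* LaurentPolynomial ℤ :=
  ((AddMonoidAlgebra.lift (LaurentPolynomial ℤ) (LaurentPolynomial ℤ) ℤ) (Tmh ℤ)).toRingHom

lemma phi_pL : phi pL = T 1 := by
  show ((AddMonoidAlgebra.lift (LaurentPolynomial ℤ) (LaurentPolynomial ℤ) ℤ) (Tmh ℤ))
      (AddMonoidAlgebra.single (0 : ℤ) (T 1 : LaurentPolynomial ℤ)) = T 1
  rw [AddMonoidAlgebra.lift_single]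
  simp [Tmh, smul_eq_mul]

lemma phi_qL : phi qL = T 1 := by
  show ((AddMonoidAlgebra.lift (LaurentPolynomial ℤ) (LaurentPolynomial ℤ) ℤ) (Tmh ℤ))
      (AddMonoidAlgebra.single (1 : ℤ) (1 : LaurentPolynomial ℤ)) = T 1
  rw [AddMonoidAlgebra.lift_single]
  simp [Tmh, smul_eq_mul]

/-- The substitution `p ↦ T 1`, `q ↦ 1`. -/
def phi2 : L →+* LaurentPolynomial ℤ :=
  ((AddMonoidAlgebra.lift (LaurentPolynomial ℤ) (LaurentPolynomial ℤ) ℤ) 1).toRingHom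

lemma phi2_pL : phi2 pL = T 1 := by
  show ((AddMonoidAlgebra.lift (LaurentPolynomial ℤ) (LaurentPolynomial ℤ) ℤ) 1)
      (AddMonoidAlgebra.single (0 : ℤ) (T 1 : LaurentPolynomial ℤ)) = T 1
  rw [AddMonoidAlgebra.lift_single]
  simp [smul_eq_mul]

lemma phi2_qL : phi2 qL = 1 := by
  show ((AddMonoidAlgebra.lift (LaurentPolynomial ℤ) (LaurentPolynomial ℤ) ℤ) 1)
      (AddMonoidAlgebra.single (1 : ℤ) (1 : LaurentPolynomial ℤ)) = 1
  rw [AddMonoidAlgebra.lift_single]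
  simp [smul_eq_mul]

lemma T1_ne_one : (T 1 : LaurentPolynomial ℤ) ≠ 1 := by
  intro h
  rw [← single_zero_one_eq_one] at h
  exact one_ne_zero (AddMonoidAlgebra.single_left_injective (R := ℤ) (one_ne_zero (α := ℤ)) h)

lemma delta_ne_zero : pL - qL ≠ 0 := by
  intro h
  have h2 := congrArg phi2 h
  rw [map_sub, phi2_pL, phi2_qL, map_zero, sub_eq_zero] at h2
  exact T1_ne_one h2

/-- Kernel of `phi` is contained in the ideal `(p - q)`. -/
lemma phi_ker {X : L} (h : phi X = 0) : X ∈ Ideal.span ({pL - qL} : Set L) := by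
  set I : Ideal L := Ideal.span ({pL - qL} : Set L) with hI
  have hu : IsUnit (Ideal.Quotient.mk I pL) :=
    (((isUnit_T (R := ℤ) 1).map LaurentPolynomial.C).map (Ideal.Quotient.mk I))
  set ψ : LaurentPolynomial ℤ →+* L ⧸ I := evalAt (A := L ⧸ I) hu.unit with hψ
  have key : ψ.comp phi = Ideal.Quotient.mk I := by
    apply L_ringHom_ext (S := L ⧸ I)
    · rw [RingHom.comp_apply, phi_pL, hψ, evalAt_T1, IsUnit.unit_spec]
    · rw [RingHom.comp_apply, phi_qL, hψ, evalAt_T1, IsUnit.unit_spec]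
      exact (Ideal.Quotient.mk_eq_mk_iff_sub_mem _ _).mpr (Ideal.subset_span rfl)
  have h2 := RingHom.congr_fun key X
  rw [RingHom.comp_apply, h, map_zero] at h2
  exact Ideal.Quotient.eq_zero_iff_mem.mp h2.symm

/-- If `e : L → ℤ` sends `p, q ↦ 1`, then the quotient map by `(p-1, q-1)` is
computed by `e`. -/
lemma mk_m_eq (e : L →+* ℤ) (hp : e pL = 1) (hq : e qL = 1) (X : L) :
    Ideal.Quotient.mk (Ideal.span ({pL - 1, qL - 1} : Set L)) X
      = ((e X : ℤ) : L ⧸ Ideal.span ({pL - 1, qL - 1} : Set L)) := by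
  set m : Ideal L := Ideal.span ({pL - 1, qL - 1} : Set L) with hm
  have key : Ideal.Quotient.mk m = (Int.castRingHom (L ⧸ m)).comp e := by
    apply L_ringHom_ext (S := L ⧸ m)
    · rw [RingHom.comp_apply, hp]
      have : pL - 1 ∈ m := Ideal.subset_span (by simp)
      have h0 : Ideal.Quotient.mk m (pL - 1) = 0 := Ideal.Quotient.eq_zero_iff_mem.mpr this
      rw [map_sub, map_one, sub_eq_zero] at h0
      simpa using h0
    · rw [RingHom.comp_apply, hq]
      have : qL - 1 ∈ m := Ideal.subset_span (by simp)
      have h0 : Ideal.Quotient.mk m (qL - 1) = 0 := Ideal.Quotient.eq_zero_iff_mem.mpr this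
      rw [map_sub, map_one, sub_eq_zero] at h0
      simpa using h0
  exact RingHom.congr_fun key X

/-- Lemma 2: An element `x` of `T` is a zero divisor (i.e. there
exists `y ≠ 0` with `x * y = 0`) if and only if `ε x = 0`, where `ε : T → ℤ`
is the ring homomorphism determined by `ε p = ε q = 1`. -/
theorem zeroDivisor_iff_eval_eq_zero
    (ε : TT →+* ℤ) (hp : ε pT = 1) (hq : ε qT = 1) (x : TT) :
    (∃ y : TT, y ≠ 0 ∧ x * y = 0) ↔ ε x = 0 := by
  set e : L →+* ℤ := ε.comp (Ideal.Quotient.mk idealI) with he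
  have hep : e pL = 1 := hp
  have heq : e qL = 1 := hq
  obtain ⟨X, rfl⟩ := Ideal.Quotient.mk_surjective x
  have hεe : ∀ Z : L, ε (Ideal.Quotient.mk idealI Z) = e Z := fun _ => rfl
  constructor
  · rintro ⟨y, hy0, hxy⟩
    obtain ⟨Y, rfl⟩ := Ideal.Quotient.mk_surjective y
    rw [hεe]
    by_contra hn
    -- X * Y ∈ idealI
    have hmem : X * Y ∈ idealI := by
      rw [← Ideal.Quotient.eq_zero_iff_mem, map_mul]
      exact hxy
    obtain ⟨A, B, hAB⟩ := Ideal.mem_span_pair.mp hmem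
    set G : L := A * (pL - 1) + B * (qL - 1) with hG
    have hXY : X * Y = G * (pL - qL) := by rw [hG]; linear_combination -hAB
    have heG : e G = 0 := by simp [hG, map_add, map_mul, map_sub, map_one, hep, heq]
    -- apply phi
    have hφδ : phi (pL - qL) = 0 := by rw [map_sub, phi_pL, phi_qL, sub_self]
    have hφ : phi X * phi Y = 0 := by
      rw [← map_mul, hXY, map_mul, hφδ, mul_zero]
    rcases mul_eq_zero.mp hφ with hX0 | hY0
    · -- then p - q divides X, so e X = 0, contradiction
      obtain ⟨c, hc⟩ := Ideal.mem_span_singleton.mp (phi_ker hX0)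
      apply hn
      have heδ : e (pL - qL) = 0 := by rw [map_sub, hep, heq, sub_self]
      rw [hc, map_mul, heδ, zero_mul]
    · obtain ⟨H, hH⟩ := Ideal.mem_span_singleton.mp (phi_ker hY0)
      have hcancel : X * H = G := by
        have h1 : (pL - qL) * (X * H) = (pL - qL) * G := by
          linear_combination hXY - X * hH
        exact mul_left_cancel₀ delta_ne_zero h1
      have heH : e H = 0 := by
        have := congrArg e hcancel
        rw [map_mul, heG] at this
        exact (mul_eq_zero.mp this).resolve_left hn
      -- H ∈ (p-1, q-1)
      have hHm : H ∈ Ideal.span ({pL - 1, qL - 1} : Set L) := by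
        rw [← Ideal.Quotient.eq_zero_iff_mem, mk_m_eq e hep heq, heH, Int.cast_zero]
      obtain ⟨a, b, hab⟩ := Ideal.mem_span_pair.mp hHm
      apply hy0
      rw [Ideal.Quotient.eq_zero_iff_mem, hH, ← hab]
      exact Ideal.mem_span_pair.mpr ⟨a, b, by ring⟩
  · intro hεx
    have heX : e X = 0 := hεx
    have hXm : X ∈ Ideal.span ({pL - 1, qL - 1} : Set L) := by
      rw [← Ideal.Quotient.eq_zero_iff_mem, mk_m_eq e hep heq, heX, Int.cast_zero]
    obtain ⟨a, b, hab⟩ := Ideal.mem_span_pair.mp hXm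
    refine ⟨Ideal.Quotient.mk idealI (pL - qL), ?_, ?_⟩
    · intro h0
      have hmem : pL - qL ∈ idealI := Ideal.Quotient.eq_zero_iff_mem.mp h0
      obtain ⟨A, B, hAB⟩ := Ideal.mem_span_pair.mp hmem
      have h1 : (A * (pL - 1) + B * (qL - 1)) * (pL - qL) = 1 * (pL - qL) := by
        linear_combination hAB
      have h2 := mul_right_cancel₀ delta_ne_zero h1
      have := congrArg e h2
      rw [map_add, map_mul, map_mul, map_sub, map_sub, map_one, hep, heq] at this
      simp at this
    · rw [← map_mul, Ideal.Quotient.eq_zero_iff_mem]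
      exact Ideal.mem_span_pair.mpr ⟨a, b, by linear_combination (pL - qL) * hab⟩
end
end

section
/- If x is an element of T = ℤ[p,p⁻¹,q,q⁻¹]/((p−1)(p−q),(q−1)(p−q)) with ε(x) ≠ 0, where ε : T → ℤ is the ring homomorphism determined by ε(p) = ε(q) = 1, then x is a regular element of T: for all y, z ∈ T, x·y = x·z implies y = z (equivalently, x is not a zero divisor). -/
/-!  The ring `T = ℤ[p,p⁻¹,q,q⁻¹] / ((p−1)(p−q), (q−1)(p−q))`.

We realize the two-variable Laurent polynomial ring `ℤ[p,p⁻¹,q,q⁻¹]` as the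
iterated Laurent polynomial ring `(ℤ[T;T⁻¹])[T;T⁻¹]`, where the inner variable
is `p` and the outer variable is `q`.  -/

noncomputable section

/- ### Auxiliary development -/

open LaurentPolynomial

/-- Evaluation of a Laurent polynomial at a unit. -/
def laurentEval {R B : Type*} [CommSemiring R] [CommSemiring B] [Algebra R B] (u : Bˣ) :
    LaurentPolynomial R →ₐ[R] B :=
  AddMonoidAlgebra.lift R B ℤ ((Units.coeHom B).comp (zpowersHom Bˣ u))

@[simp] theorem laurentEval_T {R B : Type*} [CommSemiring R] [CommSemiring B] [Algebra R B]
    (u : Bˣ) (n : ℤ) : laurentEval (R := R) u (T n) = (u ^ n : Bˣ) := by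
  rw [laurentEval, T, AddMonoidAlgebra.lift_single]
  simp [zpowersHom]

@[simp] theorem laurentEval_C {R B : Type*} [CommSemiring R] [CommSemiring B] [Algebra R B]
    (u : Bˣ) (r : R) : laurentEval u (C r) = algebraMap R B r := by
  rw [laurentEval, ← single_eq_C, AddMonoidAlgebra.lift_single]
  simp [Algebra.smul_def]

/-- Ring homs out of a Laurent polynomial ring agreeing on constants and `T 1` are equal. -/
theorem laurent_ringHom_ext {R B : Type*} [CommRing R] [CommRing B]
    {f g : LaurentPolynomial R →+* B}
    (hC : ∀ r, f (C r) = g (C r)) (hT : f (T 1) = g (T 1)) : f = g := by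
  have key : ∀ n : ℤ, f (T n) = g (T n) := by
    have hTn : f (T (-1)) = g (T (-1)) := by
      have h1 : f (T 1) * f (T (-1)) = 1 := by
        rw [← map_mul, ← T_add]; norm_num
      have h2 : g (T 1) * g (T (-1)) = 1 := by
        rw [← map_mul, ← T_add]; norm_num
      calc f (T (-1)) = f (T (-1)) * (g (T 1) * g (T (-1))) := by rw [h2, mul_one]
        _ = (f (T 1) * f (T (-1))) * g (T (-1)) := by rw [hT]; ring
        _ = g (T (-1)) := by rw [h1, one_mul]
    intro n
    induction n using Int.induction_on with
    | zero => simp [T_zero]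
    | succ k ih => rw [show ((k : ℤ) + 1) = k + 1 from rfl, T_add, map_mul, map_mul, ih, hT]
    | pred k ih => rw [show (-(k : ℤ) - 1) = -k + (-1) from by ring, T_add, map_mul, map_mul, ih, hTn]
  refine AddMonoidAlgebra.ringHom_ext (fun b => ?_) (fun a => ?_)
  · exact hC b
  · exact key a

/-- Evaluation of two-variable Laurent polynomials at a pair of units. -/
def evalLL {B : Type*} [CommRing B] (u v : Bˣ) : L →+* B :=
  letI : Algebra (LaurentPolynomial ℤ) B := ((laurentEval (R := ℤ) u).toRingHom).toAlgebra
  (laurentEval (R := LaurentPolynomial ℤ) (B := B) v).toRingHom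

@[simp] theorem evalLL_p {B : Type*} [CommRing B] (u v : Bˣ) : evalLL u v pL = u := by
  letI : Algebra (LaurentPolynomial ℤ) B := ((laurentEval (R := ℤ) u).toRingHom).toAlgebra
  show (laurentEval (R := LaurentPolynomial ℤ) (B := B) v) (C (T 1)) = u
  rw [laurentEval_C]
  show (laurentEval (R := ℤ) u) (T 1) = u
  rw [laurentEval_T, zpow_one]

@[simp] theorem evalLL_q {B : Type*} [CommRing B] (u v : Bˣ) : evalLL u v qL = v := by
  letI : Algebra (LaurentPolynomial ℤ) B := ((laurentEval (R := ℤ) u).toRingHom).toAlgebra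
  show (laurentEval (R := LaurentPolynomial ℤ) (B := B) v) (T 1) = v
  rw [laurentEval_T, zpow_one]

theorem evalLL_C {B : Type*} [CommRing B] (u v : Bˣ) (k : LaurentPolynomial ℤ) :
    evalLL u v (C k) = laurentEval (R := ℤ) (B := B) u k := by
  letI : Algebra (LaurentPolynomial ℤ) B := ((laurentEval (R := ℤ) u).toRingHom).toAlgebra
  show (laurentEval (R := LaurentPolynomial ℤ) (B := B) v) (C k) = _
  rw [laurentEval_C]
  rfl

theorem evalLL_T {B : Type*} [CommRing B] (u v : Bˣ) (n : ℤ) :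
    evalLL u v (T n) = (v ^ n : Bˣ) := by
  letI : Algebra (LaurentPolynomial ℤ) B := ((laurentEval (R := ℤ) u).toRingHom).toAlgebra
  show (laurentEval (R := LaurentPolynomial ℤ) (B := B) v) (T n) = _
  rw [laurentEval_T]

/-- Ring homs out of `L` agreeing on `pL` and `qL` are equal. -/
theorem LL_ringHom_ext {B : Type*} [CommRing B] {f g : L →+* B}
    (hp : f pL = g pL) (hq : f qL = g qL) : f = g := by
  refine laurent_ringHom_ext (fun r => ?_) hq
  have h : f.comp (C : LaurentPolynomial ℤ →+* L) = g.comp (C : LaurentPolynomial ℤ →+* L) := by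
    refine laurent_ringHom_ext (fun m => ?_) hp
    simp only [RingHom.comp_apply]
    have hc : (C (C m : LaurentPolynomial ℤ) : L) = (m : L) := by
      rw [eq_intCast (C : ℤ →+* LaurentPolynomial ℤ) m, map_intCast]
    rw [hc, map_intCast, map_intCast]
  exact RingHom.congr_fun h r

/-- The unit `T 1` in `ℤ[T;T⁻¹]`. -/
def tK : (LaurentPolynomial ℤ)ˣ := (isUnit_T (R := ℤ) 1).unit

@[simp] theorem tK_coe : (tK : LaurentPolynomial ℤ) = T 1 := rfl

/-- The map `L → ℤ[t,t⁻¹]` sending both `p` and `q` to `t`. -/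
def sigL : L →+* LaurentPolynomial ℤ := evalLL tK tK

theorem sigL_p : sigL pL = T 1 := by rw [sigL, evalLL_p]; rfl
theorem sigL_q : sigL qL = T 1 := by rw [sigL, evalLL_q]; rfl

theorem idealI_le_ker_sigL : idealI ≤ RingHom.ker sigL := by
  rw [idealI, Ideal.span_le]
  rintro a ha
  simp only [Set.mem_insert_iff, Set.mem_singleton_iff] at ha
  rcases ha with rfl | rfl <;>
    simp [RingHom.mem_ker, map_mul, map_sub, sigL_p, sigL_q]

/-- The induced map `T → ℤ[t,t⁻¹]`. -/
def sigT : TT →+* LaurentPolynomial ℤ :=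
  Ideal.Quotient.lift idealI sigL fun _ ha => RingHom.mem_ker.mp (idealI_le_ker_sigL ha)

/-- The ideal `(p - q)` in `L`. -/
def Jd : Ideal L := Ideal.span {pL - qL}

theorem Jd_le_ker_sigL : Jd ≤ RingHom.ker sigL := by
  rw [Jd, Ideal.span_le]
  rintro a ha
  simp only [Set.mem_singleton_iff] at ha
  subst ha
  simp [RingHom.mem_ker, map_sub, sigL_p, sigL_q]

/-- The induced map `L/(p-q) → ℤ[t,t⁻¹]`. -/
def sigJ : (L ⧸ Jd) →+* LaurentPolynomial ℤ :=
  Ideal.Quotient.lift Jd sigL fun _ ha => RingHom.mem_ker.mp (Jd_le_ker_sigL ha)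

theorem mem_Jd_of_sigL_eq_zero {h : L} (h0 : sigL h = 0) : h ∈ Jd := by
  have hqu : IsUnit ((Ideal.Quotient.mk Jd) qL) :=
    (isUnit_T (R := LaurentPolynomial ℤ) 1).map (Ideal.Quotient.mk Jd)
  have hsT : (laurentEval (R := ℤ) (B := L ⧸ Jd) hqu.unit).toRingHom (T 1) = (Ideal.Quotient.mk Jd) qL := by
    show laurentEval (R := ℤ) (B := L ⧸ Jd) hqu.unit (T 1) = _
    rw [laurentEval_T, zpow_one, IsUnit.unit_spec]
  have key : ((laurentEval (R := ℤ) (B := L ⧸ Jd) hqu.unit).toRingHom.comp sigJ).comp (Ideal.Quotient.mk Jd)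
      = Ideal.Quotient.mk Jd := by
    refine LL_ringHom_ext (B := L ⧸ Jd) ?_ ?_
    · show (laurentEval (R := ℤ) (B := L ⧸ Jd) hqu.unit).toRingHom (sigJ ((Ideal.Quotient.mk Jd) pL)) = _
      rw [sigJ, Ideal.Quotient.lift_mk, sigL_p, hsT]
      rw [Ideal.Quotient.mk_eq_mk_iff_sub_mem]
      exact neg_mem_iff.mp (by rw [neg_sub]; exact Ideal.subset_span rfl)
    · show (laurentEval (R := ℤ) (B := L ⧸ Jd) hqu.unit).toRingHom (sigJ ((Ideal.Quotient.mk Jd) qL)) = _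
      rw [sigJ, Ideal.Quotient.lift_mk, sigL_q, hsT]
  have hz : (Ideal.Quotient.mk Jd) h = 0 := by
    have h1 := RingHom.congr_fun key h
    rw [RingHom.comp_apply, RingHom.comp_apply, sigJ, Ideal.Quotient.lift_mk, h0, map_zero] at h1
    exact h1.symm
  exact Ideal.Quotient.eq_zero_iff_mem.mp hz


set_option synthInstance.maxHeartbeats 1000000 in
/-- The unit `1 + ε` of the dual numbers. -/
def uD : (DualNumber ℤ)ˣ where
  val := 1 + DualNumber.eps
  inv := 1 - DualNumber.eps
  val_inv := by linear_combination -DualNumber.eps_mul_eps (R := ℤ)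
  inv_val := by linear_combination -DualNumber.eps_mul_eps (R := ℤ)

/-- The map `L → ℤ[ε]` sending `p ↦ 1 + ε`, `q ↦ 1`. -/
def phiD : L →+* DualNumber ℤ := evalLL uD 1

theorem phiD_sub : phiD (pL - qL) = DualNumber.eps := by
  rw [map_sub, phiD, evalLL_p, evalLL_q]
  show (1 + DualNumber.eps) - 1 = DualNumber.eps
  ring

theorem idealI_le_ker_phiD : idealI ≤ RingHom.ker phiD := by
  have h1 : phiD (pL - 1) = DualNumber.eps := by
    rw [map_sub, phiD, evalLL_p, map_one]
    show (1 + DualNumber.eps) - 1 = DualNumber.eps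
    ring
  have h2 : phiD (qL - 1) = 0 := by
    rw [map_sub, phiD, evalLL_q, map_one]
    show (1 : DualNumber ℤ) - 1 = 0
    ring
  rw [idealI, Ideal.span_le]
  rintro a ha
  simp only [Set.mem_insert_iff, Set.mem_singleton_iff] at ha
  rcases ha with rfl | rfl <;> simp only [SetLike.mem_coe, RingHom.mem_ker, map_mul]
  · rw [h1, phiD_sub]
    exact DualNumber.eps_mul_eps
  · rw [h2]
    exact zero_mul _

/-- The image of `p - q` in `T`. -/
def dT : TT := Ideal.Quotient.mk idealI (pL - qL)

theorem mkp_mul_dT : (Ideal.Quotient.mk idealI) pL * dT = dT := by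
  have h : (Ideal.Quotient.mk idealI) (pL * (pL - qL)) = (Ideal.Quotient.mk idealI) (pL - qL) := by
    rw [Ideal.Quotient.mk_eq_mk_iff_sub_mem]
    have he : pL * (pL - qL) - (pL - qL) = (pL - 1) * (pL - qL) := by ring
    rw [he]
    exact Ideal.subset_span (Or.inl rfl)
  calc (Ideal.Quotient.mk idealI) pL * dT
      = (Ideal.Quotient.mk idealI) (pL * (pL - qL)) := (map_mul _ _ _).symm
    _ = dT := h

theorem mkq_mul_dT : (Ideal.Quotient.mk idealI) qL * dT = dT := by
  have h : (Ideal.Quotient.mk idealI) (qL * (pL - qL)) = (Ideal.Quotient.mk idealI) (pL - qL) := by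
    rw [Ideal.Quotient.mk_eq_mk_iff_sub_mem]
    have he : qL * (pL - qL) - (pL - qL) = (qL - 1) * (pL - qL) := by ring
    rw [he]
    exact Ideal.subset_span (Or.inr rfl)
  calc (Ideal.Quotient.mk idealI) qL * dT
      = (Ideal.Quotient.mk idealI) (qL * (pL - qL)) := (map_mul _ _ _).symm
    _ = dT := h

theorem inv_mul_dT {a b : TT} (hab : a * b = 1) (ha : a * dT = dT) : b * dT = dT := by
  linear_combination dT * hab - b * ha

theorem mkpinv_mul : (Ideal.Quotient.mk idealI) pL * (Ideal.Quotient.mk idealI) (C (T (-1))) = 1 := by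
  rw [← map_mul]
  have he : (pL * C (T (-1)) : L) = 1 := by
    rw [pL, ← map_mul, ← T_add]
    norm_num
  rw [he, map_one]

theorem mkqinv_mul : (Ideal.Quotient.mk idealI) qL * (Ideal.Quotient.mk idealI) (T (-1)) = 1 := by
  rw [← map_mul]
  have he : (qL * T (-1) : L) = 1 := by
    rw [qL, ← T_add]
    norm_num
  rw [he, map_one]

theorem mk_C_T_mul_dT (i : ℤ) : (Ideal.Quotient.mk idealI) (C (T i)) * dT = dT := by
  induction i using Int.induction_on with
  | zero =>
    have he : (C (T (0:ℤ)) : L) = 1 := by rw [T_zero, map_one]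
    rw [he, map_one]
    exact one_mul dT
  | succ i ih =>
    have he : (C (T ((i:ℤ)+1)) : L) = C (T i) * pL := by
      rw [pL, ← map_mul, ← T_add]
    rw [he, map_mul]
    linear_combination ((Ideal.Quotient.mk idealI) (C (T (i:ℤ)))) * mkp_mul_dT + ih
  | pred i ih =>
    have hCinv : (Ideal.Quotient.mk idealI) (C (T (-1))) * dT = dT :=
      inv_mul_dT mkpinv_mul mkp_mul_dT
    have he : (C (T (-(i:ℤ)-1)) : L) = C (T (-i)) * C (T (-1)) := by
      rw [show -(i:ℤ) - 1 = -i + (-1) from by ring, ← map_mul, ← T_add]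
    rw [he, map_mul]
    linear_combination ((Ideal.Quotient.mk idealI) (C (T (-(i:ℤ))))) * hCinv + ih

theorem mk_T_mul_dT (j : ℤ) : (Ideal.Quotient.mk idealI) (T j) * dT = dT := by
  induction j using Int.induction_on with
  | zero =>
    have he : (T (0:ℤ) : L) = 1 := T_zero
    rw [he, map_one]
    exact one_mul dT
  | succ j ih =>
    have he : (T ((j:ℤ)+1) : L) = T j * qL := by rw [qL, ← T_add]
    rw [he, map_mul]
    linear_combination ((Ideal.Quotient.mk idealI) (T (j:ℤ))) * mkq_mul_dT + ih
  | pred j ih =>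
    have hTinv : (Ideal.Quotient.mk idealI) (T (-1)) * dT = dT :=
      inv_mul_dT mkqinv_mul mkq_mul_dT
    have he : (T (-(j:ℤ)-1) : L) = T (-j) * T (-1) := by
      rw [show -(j:ℤ) - 1 = -j + (-1) from by ring, ← T_add]
    rw [he, map_mul]
    linear_combination ((Ideal.Quotient.mk idealI) (T (-(j:ℤ)))) * hTinv + ih

set_option synthInstance.maxHeartbeats 1000000 in
/-- `δ` is torsion-free in a strong sense. -/
theorem dT_torsionfree2 (n k : ℤ) (h : (n : TT) * ((k : TT) * dT) = 0) : n * k = 0 := by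
  have h1 : (Ideal.Quotient.mk idealI) ((n : L) * ((k : L) * (pL - qL)))
      = (n : TT) * ((k : TT) * dT) := by
    rw [map_mul, map_mul, map_intCast, map_intCast]
    rfl
  have h2 : ((n : L) * ((k : L) * (pL - qL))) ∈ idealI := by
    rw [← Ideal.Quotient.eq_zero_iff_mem, h1, h]
  have h3 : phiD ((n : L) * ((k : L) * (pL - qL))) = 0 := by
    have hm := idealI_le_ker_phiD h2
    rwa [RingHom.mem_ker] at hm
  rw [map_mul, map_mul, map_intCast, map_intCast, phiD_sub] at h3
  have h4 := congrArg TrivSqZeroExt.snd h3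
  simp [TrivSqZeroExt.snd_mul, TrivSqZeroExt.fst_mul] at h4
  exact mul_eq_zero.mpr h4

section eps

variable (ε : TT →+* ℤ) (hp : ε pT = 1) (hq : ε qT = 1)
include hp hq

set_option synthInstance.maxHeartbeats 1000000 in
theorem eps_eq_eval : ∀ h : L, ε ((Ideal.Quotient.mk idealI) h) = evalLL (1 : ℤˣ) 1 h := by
  have h : ε.comp (Ideal.Quotient.mk idealI) = evalLL (1 : ℤˣ) 1 := by
    refine LL_ringHom_ext ?_ ?_
    · show ε pT = evalLL (1 : ℤˣ) 1 pL
      rw [hp, evalLL_p, Units.val_one]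
    · show ε qT = evalLL (1 : ℤˣ) 1 qL
      rw [hq, evalLL_q, Units.val_one]
  exact fun a => RingHom.congr_fun h a

theorem eps_mk_C_T (i : ℤ) : ε ((Ideal.Quotient.mk idealI) (C (T i))) = 1 := by
  rw [eps_eq_eval ε hp hq, evalLL_C, laurentEval_T, one_zpow, Units.val_one]

theorem eps_mk_T (j : ℤ) : ε ((Ideal.Quotient.mk idealI) (T j)) = 1 := by
  rw [eps_eq_eval ε hp hq, evalLL_T, one_zpow, Units.val_one]

set_option synthInstance.maxHeartbeats 1000000 in
/-- Key structural lemma: `c · δ = ε(c) · δ` for every `c ∈ T`. -/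
theorem mul_dT_eq (c : TT) : c * dT = (ε c : TT) * dT := by
  obtain ⟨h, rfl⟩ := Ideal.Quotient.mk_surjective c
  induction h using LaurentPolynomial.induction_on' with
  | add f g hf hg =>
    have hab : (Ideal.Quotient.mk idealI) (f + g)
        = (Ideal.Quotient.mk idealI) f + (Ideal.Quotient.mk idealI) g := map_add _ f g
    have hε : ε ((Ideal.Quotient.mk idealI) (f + g))
        = ε ((Ideal.Quotient.mk idealI) f) + ε ((Ideal.Quotient.mk idealI) g) := by
      rw [hab, map_add]
    rw [hε, hab]
    push_cast
    linear_combination hf + hg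
  | C_mul_T n a =>
    induction a using LaurentPolynomial.induction_on' with
    | add f g hf hg =>
      have he : (C (f + g) * T n : L) = C f * T n + C g * T n := by
        rw [map_add]; ring
      have hab : (Ideal.Quotient.mk idealI) (C (f + g) * T n)
          = (Ideal.Quotient.mk idealI) (C f * T n) + (Ideal.Quotient.mk idealI) (C g * T n) := by
        rw [he, map_add]
      have hε : ε ((Ideal.Quotient.mk idealI) (C (f + g) * T n))
          = ε ((Ideal.Quotient.mk idealI) (C f * T n)) + ε ((Ideal.Quotient.mk idealI) (C g * T n)) := by
        rw [hab, map_add]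
      rw [hε, hab]
      push_cast
      linear_combination hf + hg
    | C_mul_T i m =>
      have hCm : (C (C m) : L) = (m : L) := by
        rw [eq_intCast (C : ℤ →+* LaurentPolynomial ℤ) m, map_intCast]
      have he : (C (C m * T i) * T n : L) = (m : L) * (C (T i) * T n) := by
        rw [map_mul, hCm]; ring
      have h2 : (Ideal.Quotient.mk idealI) (C (C m * T i) * T n)
          = (m : TT) * ((Ideal.Quotient.mk idealI) (C (T i)) * (Ideal.Quotient.mk idealI) (T n)) := by
        rw [he, map_mul, map_mul, map_intCast]
      have hεv : ε ((Ideal.Quotient.mk idealI) (C (C m * T i) * T n)) = m := by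
        have hεm : ε ((m : TT)) = m := map_intCast ε m
        rw [h2, map_mul, map_mul, hεm, eps_mk_C_T ε hp hq, eps_mk_T ε hp hq]
        ring
      rw [hεv, h2]
      linear_combination ((m : TT) * (Ideal.Quotient.mk idealI) (C (T i))) * mk_T_mul_dT n
        + (m : TT) * mk_C_T_mul_dT i

set_option synthInstance.maxHeartbeats 1000000 in
theorem eps_dT : ε dT = 0 := by
  have h : dT = pT - qT := map_sub (Ideal.Quotient.mk idealI) pL qL
  rw [h, map_sub, hp, hq]
  norm_num

end eps

set_option synthInstance.maxHeartbeats 1000000 in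
/-- If `x ∈ T` satisfies `ε x ≠ 0`, where `ε : T → ℤ` is the ring
homomorphism determined by `ε p = ε q = 1`, then `x` is a regular element:
`x * y = x * z` implies `y = z`. -/
theorem regular_of_eval_ne_zero
    (ε : TT →+* ℤ) (hp : ε pT = 1) (hq : ε qT = 1) (x : TT) (hx : ε x ≠ 0) :
    ∀ y z : TT, x * y = x * z → y = z := by
  intro y z hyz
  have hw : x * (y - z) = 0 := by linear_combination hyz
  suffices hs : y - z = 0 by exact sub_eq_zero.mp hs
  have hεd := eps_dT ε hp hq
  have hsx : sigT x ≠ 0 := by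
    intro h0
    obtain ⟨a, ha⟩ := Ideal.Quotient.mk_surjective x
    rw [← ha] at h0
    have hσa : sigL a = 0 := by rwa [sigT, Ideal.Quotient.lift_mk] at h0
    obtain ⟨c, hc⟩ := Ideal.mem_span_singleton'.mp (mem_Jd_of_sigL_eq_zero hσa)
    have hx0 : x = (Ideal.Quotient.mk idealI) c * dT := by
      rw [← ha, ← hc, map_mul]
      rfl
    have hεx : ε x = 0 := by
      rw [hx0, map_mul, hεd, mul_zero]
    exact hx hεx
  have hsw : sigT (y - z) = 0 := by
    have h0 : sigT x * sigT (y - z) = 0 := by rw [← map_mul, hw, map_zero]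
    exact (mul_eq_zero.mp h0).resolve_left hsx
  obtain ⟨b, hb⟩ := Ideal.Quotient.mk_surjective (y - z)
  rw [← hb] at hsw
  have hσb : sigL b = 0 := by rwa [sigT, Ideal.Quotient.lift_mk] at hsw
  obtain ⟨c, hc⟩ := Ideal.mem_span_singleton'.mp (mem_Jd_of_sigL_eq_zero hσb)
  have hw2 : y - z = (ε ((Ideal.Quotient.mk idealI) c) : TT) * dT := by
    rw [← hb, ← hc, map_mul]
    exact mul_dT_eq ε hp hq _
  have h3 : (ε ((Ideal.Quotient.mk idealI) c) : TT) * ((ε x : TT) * dT) = 0 := by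
    calc (ε ((Ideal.Quotient.mk idealI) c) : TT) * ((ε x : TT) * dT)
        = (ε ((Ideal.Quotient.mk idealI) c) : TT) * (x * dT) := by
          rw [← mul_dT_eq ε hp hq x]
      _ = x * ((ε ((Ideal.Quotient.mk idealI) c) : TT) * dT) := by ring
      _ = x * (y - z) := by rw [← hw2]
      _ = 0 := hw
  have h4 : ε ((Ideal.Quotient.mk idealI) c) * ε x = 0 := dT_torsionfree2 _ _ h3
  have h5 : ε ((Ideal.Quotient.mk idealI) c) = 0 := by
    rcases mul_eq_zero.mp h4 with h | h
    · exact h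
    · exact absurd h hx
  rw [h5] at hw2
  rw [hw2]
  norm_num
  exact zero_mul dT
end
end

section
/- In the ring T = ℤ[p,p⁻¹,q,q⁻¹]/((p−1)(p−q),(q−1)(p−q)), the element q − p is nonzero, i.e. p ≠ q in T; in particular the defining ideal ((p−1)(p−q),(q−1)(p−q)) is a proper ideal of the Laurent polynomial ring and T is a nontrivial ring. -/
/-!  The ring `T = ℤ[p,p⁻¹,q,q⁻¹] / ((p−1)(p−q), (q−1)(p−q))`.

We realize the two-variable Laurent polynomial ring `ℤ[p,p⁻¹,q,q⁻¹]` as the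
iterated Laurent polynomial ring `(ℤ[T;T⁻¹])[T;T⁻¹]`, where the inner variable
is `p` and the outer variable is `q`.  -/

noncomputable section

open DualNumber TrivSqZeroExt LaurentPolynomial

lemma eps_sq : (ε * ε : DualNumber ℤ) = 0 := eps_mul_eps

def uEps : (DualNumber ℤ)ˣ :=
  ⟨1 + ε, 1 - ε, by ring_nf; rw [sq, eps_sq]; ring,
    by ring_nf; rw [sq, eps_sq]; ring⟩

def ψ : LaurentPolynomial ℤ →+* DualNumber ℤ :=
  AddMonoidAlgebra.liftNCRingHom (algebraMap ℤ _) 1 (fun _ _ => Commute.all _ _)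

def φ : L →+* DualNumber ℤ :=
  AddMonoidAlgebra.liftNCRingHom ψ ((Units.coeHom _).comp (zpowersHom _ uEps))
    (fun _ _ => Commute.all _ _)

lemma ψ_single (a : ℤ) (b : ℤ) :
    ψ (AddMonoidAlgebra.single a b) = algebraMap ℤ _ b :=
  (AddMonoidAlgebra.liftNC_single _ _ _ _).trans (mul_one _)

lemma φ_single (a : ℤ) (b : LaurentPolynomial ℤ) :
    φ (AddMonoidAlgebra.single a b) = ψ b * ((uEps ^ a : (DualNumber ℤ)ˣ) : DualNumber ℤ) :=
  AddMonoidAlgebra.liftNC_single _ _ _ _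

lemma φ_pL : φ pL = 1 := by
  rw [pL, ← single_eq_C, φ_single]
  have : ψ (LaurentPolynomial.T 1) = 1 := by
    rw [show (LaurentPolynomial.T 1 : LaurentPolynomial ℤ) = AddMonoidAlgebra.single 1 1 from rfl,
      ψ_single]; simp
  simp [this]

lemma φ_qL : φ qL = 1 + ε := by
  rw [show (qL : L) = AddMonoidAlgebra.single 1 (1 : LaurentPolynomial ℤ) from rfl, φ_single]
  simp [uEps]

lemma ideal_le_ker : idealI ≤ RingHom.ker φ := by
  rw [idealI, Ideal.span_le]
  rintro x (rfl | rfl) <;>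
    simp only [SetLike.mem_coe, RingHom.mem_ker, map_mul, map_sub, map_one, φ_pL, φ_qL] <;>
    ring_nf <;> rw [sq, eps_sq] <;> ring

def φbar : TT →+* DualNumber ℤ := Ideal.Quotient.lift idealI φ ideal_le_ker

set_option synthInstance.maxHeartbeats 1000000 in
/-- In `T`, the element `q − p` is nonzero, i.e. `p ≠ q`; in
particular the defining ideal is proper and `T` is a nontrivial ring. -/
theorem q_sub_p_ne_zero : qT - pT ≠ 0 ∧ pT ≠ qT ∧ idealI ≠ ⊤ ∧ Nontrivial TT := by
  have key : qT - pT ≠ 0 := by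
    intro h
    have := congrArg φbar h
    simp only [map_sub, map_zero, φbar, qT, pT, Ideal.Quotient.lift_mk, φ_pL, φ_qL] at this
    change φ qL - φ pL = 0 at this
    rw [φ_pL, φ_qL] at this
    have : (ε : DualNumber ℤ) = 0 := by linear_combination this
    have h2 := congrArg TrivSqZeroExt.snd this
    rw [TrivSqZeroExt.snd_zero] at h2
    have h3 : TrivSqZeroExt.snd (ε : DualNumber ℤ) = 1 := rfl
    rw [h3] at h2
    exact one_ne_zero h2
  refine ⟨key, fun h => key (by rw [h, sub_self]), fun h => ?_, ?_⟩
  · exact key (by simp [qT, pT, Ideal.Quotient.eq_zero_iff_mem, h, sub_eq_zero,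
      Ideal.Quotient.mk_eq_mk_iff_sub_mem])
  · exact ⟨qT, pT, fun h => key (by rw [h, sub_self])⟩
end
end
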